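/- Let S be a hypergraph (set of edges) on vertex set W with |W| = w, |S| = s edges, and let f be the size of a spanning forest of S (maximum forest contained in S). Let H_0 be a graph on vertex set V = [n] with maximum degree at most d, such that S is isomorphic to a subgraph of H_0. Let σ be a uniformly random permutation of V (with W ⊆ V). Then P(σ(S) ⊆ H_0) < (e² d / n)^f. -/

import Mathlib

open Finset

/-- A graph (set of `2`-element edges) `F` is a forest iff every nonempty subfamily of
edges spans strictly more vertices than it has edges. -/
def IsForestEdges {V : Type*} [DecidableEq V] (F : Finset (Finset V)) : Prop :=
  ∀ F' ⊆ F, F'.Nonempty → F'.card + 1 ≤ (F'.biUnion id).card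

lemma facBound : ∀ (k : ℕ), 1 ≤ k → ∀ (m : ℕ),
    (m.factorial : ℝ) * ((m + k : ℕ) : ℝ) ^ k
      < Real.exp 1 ^ k * (((m + k).factorial : ℕ) : ℝ) := by
  intro k
  induction k with
  | zero => intro h; omega
  | succ k ih =>
    intro _ m
    rcases Nat.eq_zero_or_pos k with rfl | hk
    · have h1 : (1:ℝ) < Real.exp 1 := by
        have := Real.add_one_lt_exp (x := 1) one_ne_zero; linarith
      have hfac : ((m+1).factorial : ℝ) = (m+1) * m.factorial := by
        push_cast [Nat.factorial_succ]; ring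
      have hpos : (0:ℝ) < ((m:ℝ)+1) * m.factorial := by positivity
      calc (m.factorial : ℝ) * ((m + 1 : ℕ) : ℝ) ^ 1
          = ((m:ℝ)+1) * m.factorial := by push_cast; ring
        _ < Real.exp 1 * (((m:ℝ)+1) * m.factorial) := by nlinarith
        _ = Real.exp 1 ^ 1 * (((m+1).factorial : ℕ) : ℝ) := by rw [hfac]; ring
    · have ihm := ih hk m
      set n := m + k with hn
      have hn1 : 1 ≤ n := le_trans hk (Nat.le_add_left k m)
      have hnpos : (0:ℝ) < (n:ℝ) := by exact_mod_cast hn1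
      have hA : ((n:ℝ)+1)^k ≤ Real.exp 1 * (n:ℝ)^k := by
        have h1n : (1:ℝ) + 1/n ≤ Real.exp (1/(n:ℝ)) := by
          have := Real.add_one_le_exp (1/(n:ℝ)); linarith
        have h2 : ((n:ℝ)+1)^k = (1 + 1/(n:ℝ))^k * (n:ℝ)^k := by
          rw [← mul_pow]; congr 1; field_simp
        have h3 : (1 + 1/(n:ℝ))^k ≤ Real.exp (1/(n:ℝ)) ^ k :=
          pow_le_pow_left₀ (by positivity) h1n k
        have h4 : Real.exp (1/(n:ℝ)) ^ k = Real.exp (k * (1/(n:ℝ))) := by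
          rw [Real.exp_nat_mul]
        have h5 : Real.exp ((k:ℝ) * (1/(n:ℝ))) ≤ Real.exp 1 := by
          apply Real.exp_le_exp.2
          rw [mul_one_div, div_le_one hnpos]
          exact_mod_cast Nat.le_add_left k m
        have hnk : (0:ℝ) ≤ (n:ℝ)^k := by positivity
        calc ((n:ℝ)+1)^k = (1 + 1/(n:ℝ))^k * (n:ℝ)^k := h2
          _ ≤ Real.exp 1 * (n:ℝ)^k := by
              apply mul_le_mul_of_nonneg_right _ hnk
              exact le_trans h3 (by rw [h4]; exact h5)
      have hmk : m + (k+1) = n + 1 := by omega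
      have hfacpos : (0:ℝ) < (m.factorial : ℝ) := by positivity
      have hpos2 : (0:ℝ) < ((n:ℝ)+1) * Real.exp 1 := by positivity
      have hfs : (((n+1).factorial : ℕ) : ℝ) = ((n:ℝ)+1) * (n.factorial : ℝ) := by
        push_cast [Nat.factorial_succ]; ring
      rw [hmk]
      have cast1 : (((n:ℕ)+1 : ℕ) : ℝ) = (n:ℝ)+1 := by push_cast; ring
      calc (m.factorial : ℝ) * (((n+1 : ℕ)) : ℝ) ^ (k+1)
          = ((n:ℝ)+1) * (((n:ℝ)+1)^k * m.factorial) := by rw [cast1]; ring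
        _ ≤ ((n:ℝ)+1) * ((Real.exp 1 * (n:ℝ)^k) * m.factorial) := by
            apply mul_le_mul_of_nonneg_left _ (by positivity)
            exact mul_le_mul_of_nonneg_right hA (le_of_lt hfacpos)
        _ = (((n:ℝ)+1) * Real.exp 1) * ((m.factorial : ℝ) * ((n:ℕ):ℝ)^k) := by ring
        _ < (((n:ℝ)+1) * Real.exp 1) * (Real.exp 1 ^ k * ((n.factorial : ℕ):ℝ)) := by
            exact mul_lt_mul_of_pos_left ihm hpos2
        _ = Real.exp 1 ^ (k+1) * (((n+1).factorial : ℕ) : ℝ) := by rw [hfs]; ring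

lemma exists_leaf {V : Type*} [DecidableEq V] {F : Finset (Finset V)}
    (h2 : ∀ e ∈ F, e.card = 2) (hforest : IsForestEdges F) (hne : F.Nonempty) :
    ∃ e ∈ F, ∃ b ∈ e, ∀ e' ∈ F, b ∈ e' → e' = e := by
  classical
  by_contra hcon
  push_neg at hcon
  set U := F.biUnion id with hU
  have hsub : ∀ e ∈ F, e ⊆ U := fun e he => subset_biUnion_of_mem id he
  have hdeg : ∀ v ∈ U, 2 ≤ (F.filter (fun e => v ∈ e)).card := by
    intro v hv
    rw [hU, mem_biUnion] at hv
    obtain ⟨e, he, hve⟩ := hv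
    obtain ⟨e', he', hve', hne'⟩ := hcon e he v hve
    exact Finset.one_lt_card.2 ⟨e', mem_filter.2 ⟨he', hve'⟩, e, mem_filter.2 ⟨he, hve⟩, hne'⟩
  have hcount : ∑ e ∈ F, e.card = ∑ v ∈ U, (F.filter (fun e => v ∈ e)).card := by
    have h1 : ∀ e ∈ F, e.card = ∑ v ∈ U, if v ∈ e then 1 else 0 := by
      intro e he
      rw [← Finset.card_filter]
      congr 1
      rw [Finset.filter_mem_eq_inter, Finset.inter_eq_right.2 (hsub e he)]
    rw [Finset.sum_congr rfl h1, Finset.sum_comm]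
    exact Finset.sum_congr rfl fun v _ => (Finset.card_filter _ _).symm
  have h2F : ∑ e ∈ F, e.card = 2 * F.card := by
    rw [Finset.sum_congr rfl h2, Finset.sum_const, smul_eq_mul, mul_comm]
  have hUge : 2 * (F.card + 1) ≤ 2 * U.card := by
    have h := hforest F (le_refl _) hne
    rw [← hU] at h
    omega
  have hsumge : 2 * U.card ≤ ∑ v ∈ U, (F.filter (fun e => v ∈ e)).card := by
    calc 2 * U.card = ∑ _v ∈ U, 2 := by rw [Finset.sum_const, smul_eq_mul, mul_comm]
      _ ≤ _ := Finset.sum_le_sum hdeg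
  omega

open scoped Classical in
lemma forest_count {V : Type*} [Fintype V] [DecidableEq V]
    (H₀ : Finset (Finset V)) (d : ℕ)
    (hH2 : ∀ e ∈ H₀, e.card = 2)
    (hdeg : ∀ v : V, (H₀.filter (fun e => v ∈ e)).card ≤ d) :
    ∀ F : Finset (Finset V), (∀ e ∈ F, e.card = 2) → IsForestEdges F →
      (univ.filter fun g : V → V => ∀ e ∈ F, e.image g ∈ H₀).card
          * (Fintype.card V) ^ F.card
        ≤ d ^ F.card * (Fintype.card V) ^ (Fintype.card V) := by
  intro F
  induction F using Finset.strongInduction with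
  | _ F ih =>
    intro h2 hforest
    rcases F.eq_empty_or_nonempty with rfl | hne
    · simp [Fintype.card_fun, Finset.filter_true_of_mem]
    obtain ⟨e, heF, b, hbe, hleaf⟩ := exists_leaf h2 hforest hne
    -- get the other endpoint a
    obtain ⟨a, hab, hea⟩ : ∃ a, a ≠ b ∧ e = {a, b} := by
      obtain ⟨x, y, hxy, rfl⟩ := Finset.card_eq_two.1 (h2 e heF)
      rcases Finset.mem_insert.1 hbe with rfl | hb
      · exact ⟨y, fun h => hxy h.symm, by rw [Finset.pair_comm]⟩
      · rw [Finset.mem_singleton] at hb; subst hb; exact ⟨x, hxy, rfl⟩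
    set F' := F.erase e with hF'
    have hF'sub : F' ⊆ F := Finset.erase_subset _ _
    have hbF' : ∀ e' ∈ F', b ∉ e' := by
      intro e' he' hb
      exact (Finset.ne_of_mem_erase he') (hleaf e' (Finset.mem_of_mem_erase he') hb)
    have hcard : F'.card + 1 = F.card := Finset.card_erase_add_one heF
    set P := univ.filter fun g : V → V => ∀ e' ∈ F, e'.image g ∈ H₀ with hP
    set P' := univ.filter fun g : V → V => ∀ e' ∈ F', e'.image g ∈ H₀ with hP'
    set A := univ.filter (fun g : V → V =>
      (∀ e' ∈ F', e'.image g ∈ H₀) ∧ g b = a) with hA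
    -- images of edges in F' unaffected by updating at b
    have himg : ∀ (g : V → V) (v : V) (e' : Finset V), e' ∈ F' →
        e'.image (Function.update g b v) = e'.image g := by
      intro g v e' he'
      apply Finset.image_congr
      intro x hx
      exact Function.update_of_ne (by rintro rfl; exact hbF' e' he' hx) _ _
    -- Claim 1 : P.card ≤ d * A.card
    have claim1 : P.card ≤ d * A.card := by
      have him : P.image (fun g => Function.update g b a) ⊆ A := by
        intro h hh
        obtain ⟨g, hg, rfl⟩ := Finset.mem_image.1 hh
        rw [hA, mem_filter]
        rw [hP, mem_filter] at hg
        refine ⟨mem_univ _, fun e' he' => ?_, Function.update_self _ _ _⟩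
        rw [himg g a e' he']
        exact hg.2 e' (hF'sub he')
      have hfib : ∀ h ∈ P.image (fun g => Function.update g b a),
          (P.filter fun g => Function.update g b a = h).card ≤ d := by
        intro h hh
        refine le_trans (Finset.card_le_card_of_injOn (fun g => e.image g)
          ?_ ?_) (hdeg (h a))
        · -- maps to H₀.filter (h a ∈ ·)
          intro g hg
          rw [Finset.mem_coe, mem_filter] at hg
          have hgP := hg.1
          rw [hP, mem_filter] at hgP
          have h1 : e.image g ∈ H₀ := hgP.2 e heF
          refine mem_filter.2 ⟨h1, ?_⟩
          have hga : g a = h a := by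
            rw [← hg.2]; exact (Function.update_of_ne hab _ _).symm
          rw [← hga]
          exact Finset.mem_image_of_mem g (hea ▸ Finset.mem_insert_self a {b})
        · -- injective on fiber
          intro g hg g' hg' heq
          have heq2 : e.image g = e.image g' := heq
          simp only [Finset.coe_filter, Set.mem_setOf_eq] at hg hg'
          have hgoff : ∀ x, x ≠ b → g x = h x := by
            intro x hx
            rw [← hg.2]; exact (Function.update_of_ne hx _ _).symm
          have hg'off : ∀ x, x ≠ b → g' x = h x := by
            intro x hx
            rw [← hg'.2]; exact (Function.update_of_ne hx _ _).symm
          have hgP := hg.1; have hg'P := hg'.1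
          rw [hP, mem_filter] at hgP hg'P
          have himgg : e.image g = {g a, g b} := by
            rw [hea]; simp [Finset.image_insert]
          have himgg' : e.image g' = {g' a, g' b} := by
            rw [hea]; simp [Finset.image_insert]
          have hcard2 : (e.image g).card = 2 := hH2 _ (hgP.2 e heF)
          have hgba : g b ≠ g a := by
            intro hcontra
            rw [himgg, hcontra] at hcard2
            simp at hcard2
          have hcard2' : (e.image g').card = 2 := hH2 _ (hg'P.2 e heF)
          have hg'ba : g' b ≠ g' a := by
            intro hcontra
            rw [himgg', hcontra] at hcard2'
            simp at hcard2'
          have hgaa : g a = h a := hgoff a hab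
          have hg'aa : g' a = h a := hg'off a hab
          have hbb : g b = g' b := by
            have : g b ∈ e.image g' := by
              rw [← heq2]; rw [himgg]; exact Finset.mem_insert_of_mem (Finset.mem_singleton_self _)
            rw [himgg'] at this
            rcases Finset.mem_insert.1 this with h1 | h1
            · exact absurd (h1.trans (hg'aa.trans hgaa.symm)) hgba
            · exact Finset.mem_singleton.1 h1
          funext x
          by_cases hx : x = b
          · subst hx; exact hbb
          · rw [hgoff x hx, hg'off x hx]
      calc P.card ≤ d * (P.image (fun g => Function.update g b a)).card :=
            Finset.card_le_mul_card_image _ d hfib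
        _ ≤ d * A.card := Nat.mul_le_mul_left d (Finset.card_le_card him)
    -- Claim 2 : A.card * card V ≤ P'.card
    have claim2 : A.card * Fintype.card V ≤ P'.card := by
      have : (A ×ˢ (univ : Finset V)).card ≤ P'.card := by
        apply Finset.card_le_card_of_injOn (fun p => Function.update p.1 b p.2)
        · rintro ⟨g, v⟩ hp
          rw [Finset.mem_coe, Finset.mem_product] at hp
          have hgA := hp.1
          rw [hA, mem_filter] at hgA
          refine mem_filter.2 ⟨mem_univ _, fun e' he' => ?_⟩
          rw [himg g v e' he']
          exact hgA.2.1 e' he'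
        · rintro ⟨g, v⟩ hp ⟨g', v'⟩ hp' heq
          simp only [Finset.coe_product, Set.mem_prod, Finset.mem_coe] at hp hp'
          have hgA := hp.1; have hg'A := hp'.1
          rw [hA, mem_filter] at hgA hg'A
          have hvv : v = v' := by
            have h3 : Function.update g b v b = Function.update g' b v' b := congrFun heq b
            simpa using h3
          have hgg : g = g' := by
            funext x
            by_cases hx : x = b
            · subst hx; rw [hgA.2.2, hg'A.2.2]
            · have h3 : Function.update g b v x = Function.update g' b v' x := congrFun heq x
              rwa [Function.update_of_ne hx, Function.update_of_ne hx] at h3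
          rw [hvv, hgg]
      calc A.card * Fintype.card V = (A ×ˢ (univ : Finset V)).card := by
            rw [Finset.card_product, Finset.card_univ]
        _ ≤ P'.card := this
    -- induction hypothesis on F'
    have ihF' : P'.card * (Fintype.card V) ^ F'.card
        ≤ d ^ F'.card * (Fintype.card V) ^ (Fintype.card V) := by
      apply ih F' (Finset.erase_ssubset heF) (fun e' he' => h2 e' (hF'sub he'))
      intro F'' hF'' hne''
      exact hforest F'' (le_trans hF'' hF'sub) hne''
    calc P.card * (Fintype.card V) ^ F.card
        = P.card * ((Fintype.card V) ^ F'.card * Fintype.card V) := by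
          rw [← hcard, pow_succ]
      _ ≤ (d * A.card) * ((Fintype.card V) ^ F'.card * Fintype.card V) :=
          Nat.mul_le_mul_right _ claim1
      _ = d * ((A.card * Fintype.card V) * (Fintype.card V) ^ F'.card) := by ring
      _ ≤ d * (P'.card * (Fintype.card V) ^ F'.card) :=
          Nat.mul_le_mul_left _ (Nat.mul_le_mul_right _ claim2)
      _ ≤ d * (d ^ F'.card * (Fintype.card V) ^ (Fintype.card V)) :=
          Nat.mul_le_mul_left _ ihF'
      _ = d ^ F.card * (Fintype.card V) ^ (Fintype.card V) := by
          rw [← hcard, pow_succ]; ring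

open scoped Classical in
/-- If `S` is a nonempty graph on vertices inside `V` (`|V| = n`) with maximum forest size
`f`, isomorphic to a subgraph of a graph `H₀` on `V` with maximum degree at most `d`, and
`σ` is a uniformly random permutation of `V`, then `P(σ(S) ⊆ H₀) < (e²d/n)^f`. -/
theorem stmt14 {V : Type*} [Fintype V] [DecidableEq V] (n d : ℕ)
    (hn : Fintype.card V = n)
    (S H₀ : Finset (Finset V))
    (hS2 : ∀ e ∈ S, e.card = 2) (hH2 : ∀ e ∈ H₀, e.card = 2)
    (hSne : S.Nonempty)
    (hdeg : ∀ v : V, (H₀.filter (fun e => v ∈ e)).card ≤ d)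
    (hemb : ∃ φ : V → V, Function.Injective φ ∧ ∀ e ∈ S, e.image φ ∈ H₀)
    (f : ℕ) (hf : f = (S.powerset.filter IsForestEdges).sup Finset.card) :
    ((Finset.univ.filter
        (fun σ : Equiv.Perm V => ∀ e ∈ S, e.image σ ∈ H₀)).card : ℝ)
        / (Fintype.card (Equiv.Perm V))
      < (Real.exp 1 ^ 2 * d / n) ^ f := by
  classical
  subst hn
  obtain ⟨e₀, he₀⟩ := hSne
  -- the singleton {e₀} is a forest
  have hsing : ({e₀} : Finset (Finset V)) ∈ S.powerset.filter IsForestEdges := by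
    refine mem_filter.2 ⟨mem_powerset.2 (singleton_subset_iff.2 he₀), ?_⟩
    intro F' hF' hne'
    have hF'e : F' = {e₀} := by
      rcases Finset.subset_singleton_iff.1 hF' with rfl | h
      · exact absurd hne' (by simp)
      · exact h
    subst hF'e
    simp only [Finset.card_singleton, Finset.singleton_biUnion, id]
    rw [hS2 e₀ he₀]
  have hf1 : 1 ≤ f := by
    rw [hf]
    calc 1 = ({e₀} : Finset (Finset V)).card := by simp
      _ ≤ _ := Finset.le_sup hsing
  -- a maximum forest F
  obtain ⟨F, hFmem, hFsup⟩ :=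
    Finset.exists_mem_eq_sup (S.powerset.filter IsForestEdges) ⟨_, hsing⟩ Finset.card
  have hfF : F.card = f := (hf.trans hFsup).symm
  have hFS : F ⊆ S := mem_powerset.1 (mem_filter.1 hFmem).1
  have hFforest : IsForestEdges F := (mem_filter.1 hFmem).2
  have hF2 : ∀ e ∈ F, e.card = 2 := fun e he => hS2 e (hFS he)
  have hFne : F.Nonempty := Finset.card_pos.1 (by omega)
  set W := F.biUnion id with hW
  set w := W.card with hwdef
  have hWsub : ∀ e ∈ F, e ⊆ W := fun e he => subset_biUnion_of_mem id he
  have hfw : f + 1 ≤ w := by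
    have h := hFforest F (le_refl _) hFne
    rw [← hW] at h; omega
  have hw2f : w ≤ 2 * f := by
    calc w ≤ ∑ e ∈ F, e.card := Finset.card_biUnion_le
      _ = 2 * f := by
          rw [Finset.sum_congr rfl hF2, Finset.sum_const, smul_eq_mul, mul_comm, hfF]
  have hwn : w ≤ Fintype.card V := Finset.card_le_univ W
  have hVpos : 0 < Fintype.card V := by omega
  haveI hVne : Nonempty V := Fintype.card_pos_iff.1 hVpos
  set v₀ : V := Classical.arbitrary V with hv₀
  obtain ⟨φ, hφinj, hφ⟩ := hemb
  have hd1 : 1 ≤ d := by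
    have h1 : e₀.image φ ∈ H₀ := hφ e₀ he₀
    have h2 : (e₀.image φ).Nonempty := Finset.card_pos.1 (by rw [hH2 _ h1]; omega)
    obtain ⟨v, hv⟩ := h2
    calc 1 ≤ (H₀.filter (fun e => v ∈ e)).card :=
          Finset.card_pos.2 ⟨e₀.image φ, mem_filter.2 ⟨h1, hv⟩⟩
      _ ≤ d := hdeg v
  set nn := Fintype.card V with hnn
  set B := univ.filter (fun g : V → V =>
    (∀ e ∈ F, e.image g ∈ H₀) ∧ ∀ x, x ∉ W → g x = v₀) with hB
  set P := univ.filter (fun g : V → V => ∀ e ∈ F, e.image g ∈ H₀) with hP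
  set N := univ.filter (fun σ : Equiv.Perm V => ∀ e ∈ S, e.image σ ∈ H₀) with hN
  -- Step 1 : N.card ≤ (nn - w)! * B.card
  have step1 : N.card ≤ (nn - w).factorial * B.card := by
    apply Finset.card_le_mul_card_image_of_maps_to
      (f := fun σ : Equiv.Perm V => fun x => if x ∈ W then σ x else v₀) (t := B)
    · intro σ hσ
      rw [hN, mem_filter] at hσ
      refine mem_filter.2 ⟨mem_univ _, fun e he => ?_, fun x hx => if_neg hx⟩
      have : e.image (fun x => if x ∈ W then σ x else v₀) = e.image σ :=
        Finset.image_congr (fun x hx => if_pos (hWsub e he hx))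
      rw [this]
      exact hσ.2 e (hFS he)
    · intro h _
      rcases (N.filter fun σ : Equiv.Perm V =>
          (fun x => if x ∈ W then σ x else v₀) = h).eq_empty_or_nonempty with hemp | ⟨σ₀, hσ₀⟩
      · rw [hemp]; simp
      have hfixval : ∀ σ, σ ∈ (N.filter fun σ : Equiv.Perm V =>
          (fun x => if x ∈ W then σ x else v₀) = h) → ∀ x ∈ W, σ x = h x := by
        intro σ hσ x hx
        rw [mem_filter] at hσ
        rw [← hσ.2]; simp [hx]
      have hρfix : ∀ σ, σ ∈ (N.filter fun σ : Equiv.Perm V =>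
          (fun x => if x ∈ W then σ x else v₀) = h) →
          ∀ x ∈ W, (σ.trans σ₀.symm) x = x := by
        intro σ hσ x hx
        have h1 : σ x = h x := hfixval σ hσ x hx
        have h2 : σ₀ x = h x := hfixval σ₀ hσ₀ x hx
        simp only [Equiv.trans_apply, h1, ← h2, Equiv.symm_apply_apply]
      have hρiff : ∀ σ, σ ∈ (N.filter fun σ : Equiv.Perm V =>
          (fun x => if x ∈ W then σ x else v₀) = h) →
          ∀ x : V, x ∉ W ↔ (σ.trans σ₀.symm) x ∉ W := by
        intro σ hσ x
        constructor
        · intro hx hρx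
          have h1 := hρfix σ hσ _ hρx
          have h2 := (σ.trans σ₀.symm).injective h1
          rw [h2] at hρx
          exact hx hρx
        · intro hρx hx
          apply hρx
          rw [hρfix σ hσ x hx]
          exact hx
      have hle : (N.filter fun σ : Equiv.Perm V =>
          (fun x => if x ∈ W then σ x else v₀) = h).card
          ≤ (univ : Finset (Equiv.Perm {x : V // x ∉ W})).card := by
        apply Finset.card_le_card_of_injOn
          (fun σ => if hσ : σ ∈ (N.filter fun σ : Equiv.Perm V =>
            (fun x => if x ∈ W then σ x else v₀) = h)
            then Equiv.Perm.subtypePerm (σ.trans σ₀.symm) (fun x => (hρiff σ hσ x).symm) else 1)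
        · intro σ _; exact mem_univ _
        · intro σ hσ τ hτ heq
          rw [Finset.mem_coe] at hσ hτ
          dsimp only at heq
          rw [dif_pos hσ, dif_pos hτ] at heq
          apply Equiv.ext
          intro x
          by_cases hx : x ∈ W
          · rw [hfixval σ hσ x hx, hfixval τ hτ x hx]
          · have h1 := Equiv.ext_iff.1 heq ⟨x, hx⟩
            have h2 : (σ.trans σ₀.symm) x = (τ.trans σ₀.symm) x := by
              exact Subtype.ext_iff.1 h1
            simp only [Equiv.trans_apply] at h2
            exact σ₀.symm.injective h2
      refine le_trans hle ?_
      rw [Finset.card_univ, Fintype.card_perm]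
      have hcardsub : Fintype.card {x : V // x ∉ W} = nn - w := by
        simp [Fintype.card_subtype_compl, hnn, hwdef]
      rw [hcardsub]
  -- Step 2 : B.card * nn ^ (nn - w) ≤ P.card
  have step2 : B.card * nn ^ (nn - w) ≤ P.card := by
    have hcardeq : (B ×ˢ (univ : Finset ({x : V // x ∈ Wᶜ} → V))).card
        = B.card * nn ^ (nn - w) := by
      rw [Finset.card_product, Finset.card_univ, Fintype.card_fun, Fintype.card_coe,
        Finset.card_compl]
    rw [← hcardeq]
    apply Finset.card_le_card_of_injOn
      (fun p => fun x => if hx : x ∈ W then p.1 x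
        else p.2 ⟨x, by simp [Finset.mem_compl, hx]⟩)
    · rintro ⟨g, u⟩ hp
      rw [Finset.mem_coe, Finset.mem_product] at hp
      have hgB := hp.1
      rw [hB, mem_filter] at hgB
      refine mem_filter.2 ⟨mem_univ _, fun e he => ?_⟩
      rw [Finset.image_congr (fun x hx => dif_pos (hWsub e he hx))]
      exact hgB.2.1 e he
    · rintro ⟨g, u⟩ hp ⟨g', u'⟩ hp' heq
      simp only [Finset.coe_product, Set.mem_prod, Finset.mem_coe] at hp hp'
      have hgB := hp.1
      have hg'B := hp'.1
      rw [hB, mem_filter] at hgB hg'B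
      have hgg : g = g' := by
        funext x
        by_cases hx : x ∈ W
        · have h3 := congrFun heq x
          simpa [hx] using h3
        · rw [hgB.2.2 x hx, hg'B.2.2 x hx]
      have huu : u = u' := by
        funext y
        obtain ⟨x, hx⟩ := y
        have hxW : x ∉ W := by simpa using hx
        have h3 := congrFun heq x
        simpa [hxW] using h3
      rw [hgg, huu]
  -- Step 3 : B.card ≤ d ^ f * nn ^ (w - f)
  have hforestcount := forest_count H₀ d hH2 hdeg F hF2 hFforest
  rw [hfF] at hforestcount
  have step3 : B.card ≤ d ^ f * nn ^ (w - f) := by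
    have hpos : 0 < nn ^ ((nn - w) + f) := pow_pos hVpos _
    refine Nat.le_of_mul_le_mul_right ?_ hpos
    calc B.card * nn ^ ((nn - w) + f)
        = (B.card * nn ^ (nn - w)) * nn ^ f := by rw [pow_add]; ring
      _ ≤ P.card * nn ^ f := Nat.mul_le_mul_right _ step2
      _ ≤ d ^ f * nn ^ nn := hforestcount
      _ = (d ^ f * nn ^ (w - f)) * nn ^ ((nn - w) + f) := by
          rw [mul_assoc, ← pow_add]
          congr 2
          omega
  have hNB : N.card ≤ (nn - w).factorial * (d ^ f * nn ^ (w - f)) :=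
    le_trans step1 (Nat.mul_le_mul_left _ step3)
  -- real arithmetic
  rw [Fintype.card_perm]
  have hfacpos : (0:ℝ) < (nn.factorial : ℝ) := by exact_mod_cast nn.factorial_pos
  rw [div_lt_iff₀ hfacpos]
  have hnpos : (0:ℝ) < (nn : ℝ) := by exact_mod_cast hVpos
  have hdpos : (0:ℝ) < (d : ℝ) := by exact_mod_cast hd1
  have hkey : ((nn - w).factorial : ℝ) * (nn:ℝ) ^ w
      < Real.exp 1 ^ w * (nn.factorial : ℝ) := by
    have h := facBound w (by omega) (nn - w)
    rw [Nat.sub_add_cancel hwn] at h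
    exact_mod_cast h
  have hexp1 : (1:ℝ) ≤ Real.exp 1 := by have := Real.add_one_le_exp 1; linarith
  have hexp2f : Real.exp 1 ^ w ≤ Real.exp 1 ^ (2 * f) := pow_le_pow_right₀ hexp1 hw2f
  have hNR : (N.card : ℝ) ≤ ((nn - w).factorial : ℝ) * ((d:ℝ) ^ f * (nn:ℝ) ^ (w - f)) := by
    exact_mod_cast hNB
  refine lt_of_le_of_lt hNR ?_
  rw [← mul_lt_mul_iff_of_pos_right (pow_pos hnpos f)]
  have hpowsplit : (nn:ℝ) ^ (w - f) * (nn:ℝ) ^ f = (nn:ℝ) ^ w := by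
    rw [← pow_add]
    congr 1
    omega
  have hRHS : ((Real.exp 1 ^ 2 * d / nn) ^ f * (nn.factorial:ℝ)) * (nn:ℝ) ^ f
      = (Real.exp 1 ^ (2 * f) * (d:ℝ) ^ f) * (nn.factorial : ℝ) := by
    rw [div_pow, mul_pow, ← pow_mul]
    field_simp
  rw [hRHS]
  calc ((nn - w).factorial : ℝ) * ((d:ℝ)^f * (nn:ℝ)^(w-f)) * (nn:ℝ)^f
      = (d:ℝ)^f * (((nn-w).factorial:ℝ) * ((nn:ℝ)^(w-f) * (nn:ℝ)^f)) := by ring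
    _ = (d:ℝ)^f * (((nn-w).factorial:ℝ) * (nn:ℝ)^w) := by rw [hpowsplit]
    _ < (d:ℝ)^f * (Real.exp 1 ^ w * (nn.factorial:ℝ)) :=
        mul_lt_mul_of_pos_left hkey (pow_pos hdpos f)
    _ ≤ (d:ℝ)^f * (Real.exp 1 ^ (2*f) * (nn.factorial:ℝ)) :=
        mul_le_mul_of_nonneg_left (mul_le_mul_of_nonneg_right hexp2f hfacpos.le)
          (pow_pos hdpos f).le
    _ = (Real.exp 1 ^ (2*f) * (d:ℝ)^f) * (nn.factorial:ℝ) := by ring
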